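/- Let X be a random variable with E[X]=0, E[X^2]=1, E[|X|^3]=ρ<∞, and let Y = X·1_{|X|≤h} for h>0. Then for any s ≥ 0, E[exp(sY)] ≤ 1 + s²/2 + (ρ/h³)(exp(sh) − 1). -/

import Mathlib

open MeasureTheory ProbabilityTheory Real

lemma exp_split' (x : ℝ) :
    Real.exp x = 1 + x + x^2/2 + ∑' n : ℕ, x^(n+3) / (n+3).factorial := by
  have hsum3 : Summable (fun n : ℕ => x ^ (n+3) / (n+3).factorial) :=
    (summable_nat_add_iff 3).2 (Real.summable_pow_div_factorial x)
  have h := Summable.sum_add_tsum_nat_add' (f := fun n : ℕ => x ^ n / n.factorial) (k := 3) hsum3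
  have hx : Real.exp x = ∑' n : ℕ, x ^ n / n.factorial := by
    rw [Real.exp_eq_exp_ℝ, NormedSpace.exp_eq_tsum_div]
  rw [hx, ← h, Finset.sum_range_succ, Finset.sum_range_succ, Finset.sum_range_one]
  norm_num

lemma exp_cubic_bound' {t u : ℝ} (ht : 0 ≤ t) (htu : t ≤ u) :
    Real.exp t ≤ 1 + t + t^2/2 + t^3/u^3 * (Real.exp u - 1 - u - u^2/2) := by
  rcases eq_or_lt_of_le (ht.trans htu) with hu | hu
  · have htz : t = 0 := le_antisymm (htu.trans hu.symm.le) ht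
    simp [← hu, htz]
  have hsumt : Summable (fun n : ℕ => t ^ (n+3) / (n+3).factorial) :=
    (summable_nat_add_iff 3).2 (Real.summable_pow_div_factorial t)
  have hsumu : Summable (fun n : ℕ => t^3/u^3 * (u ^ (n+3) / (n+3).factorial)) :=
    ((summable_nat_add_iff 3).2 (Real.summable_pow_div_factorial u)).mul_left _
  have hterm : ∀ n : ℕ, t ^ (n+3) / (n+3).factorial
      ≤ t^3/u^3 * (u ^ (n+3) / (n+3).factorial) := by
    intro n
    have h1 : t ^ (n+3) = t^3 * t^n := by ring
    have h2 : t^n ≤ u^n := pow_le_pow_left₀ ht htu n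
    have h3 : t^3 * t^n ≤ t^3 * u^n :=
      mul_le_mul_of_nonneg_left h2 (by positivity)
    have h4 : t^3/u^3 * (u ^ (n+3) / (n+3).factorial) = t^3 * u^n / (n+3).factorial := by
      field_simp; ring
    rw [h1, h4]
    exact div_le_div_of_nonneg_right h3 (by positivity)
  have hts := Summable.tsum_le_tsum hterm hsumt hsumu
  rw [exp_split' t, exp_split' u]
  have hrw : 1 + u + u^2/2 + (∑' n : ℕ, u^(n+3) / (n+3).factorial) - 1 - u - u^2/2
      = ∑' n : ℕ, u^(n+3) / (n+3).factorial := by ring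
  rw [hrw, ← tsum_mul_left]
  linarith

lemma exp_le_quadratic' {t : ℝ} (ht : t ≤ 0) : Real.exp t ≤ 1 + t + t^2/2 := by
  have h1 : 1 + (-t) + (-t)^2/2 ≤ Real.exp (-t) :=
    Real.quadratic_le_exp_of_nonneg (by linarith)
  have h2 : Real.exp t * Real.exp (-t) = 1 := by rw [← Real.exp_add]; simp
  nlinarith [Real.exp_pos t, Real.exp_pos (-t)]

lemma pt_bound' {y h s : ℝ} (hh : 0 < h) (hs : 0 ≤ s) (hy : |y| ≤ h) :
    Real.exp (s*y) ≤ 1 + s*y + s^2/2*y^2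
      + (Real.exp (s*h) - 1 - s*h - s^2*h^2/2)/h^3 * |y|^3 := by
  have hC : 0 ≤ Real.exp (s*h) - 1 - s*h - s^2*h^2/2 := by
    have := Real.quadratic_le_exp_of_nonneg (mul_nonneg hs hh.le); nlinarith
  have hterm : 0 ≤ (Real.exp (s*h) - 1 - s*h - s^2*h^2/2)/h^3 * |y|^3 :=
    mul_nonneg (by positivity) (by positivity)
  rcases le_or_gt (s*y) 0 with hsy | hsy
  · have := exp_le_quadratic' hsy
    nlinarith
  · have hs0 : 0 < s := by
      rcases hs.lt_or_eq with h' | h'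
      · exact h'
      · exfalso; rw [← h'] at hsy; simp at hsy
    have hy0 : 0 < y := by nlinarith
    have hk := exp_cubic_bound' hsy.le
      (mul_le_mul_of_nonneg_left (le_trans (le_abs_self y) hy) hs)
    have hfrac : (s*y)^3/(s*h)^3 = |y|^3/h^3 := by
      rw [abs_of_pos hy0]; field_simp
    rw [hfrac] at hk
    have e1 : |y|^3/h^3 * (Real.exp (s*h) - 1 - s*h - (s*h)^2/2)
        = (Real.exp (s*h) - 1 - s*h - s^2*h^2/2)/h^3 * |y|^3 := by ring
    have e2 : (s*y)^2/2 = s^2/2*y^2 := by ring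
    linarith

theorem stmt1 {Ω : Type*} [MeasureSpace Ω] [IsProbabilityMeasure (ℙ : Measure Ω)]
    (X : Ω → ℝ) (ρ h s : ℝ) (hmeas : Measurable X) (hh : 0 < h) (hs : 0 ≤ s)
    (hint3 : Integrable (fun ω => |X ω| ^ 3) ℙ)
    (h1 : ∫ ω, X ω ∂ℙ = 0) (h2 : ∫ ω, (X ω) ^ 2 ∂ℙ = 1)
    (h3 : ∫ ω, |X ω| ^ 3 ∂ℙ = ρ)
    (Y : Ω → ℝ) (hY : ∀ ω, Y ω = if |X ω| ≤ h then X ω else 0) :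
    ∫ ω, Real.exp (s * Y ω) ∂ℙ ≤ 1 + s ^ 2 / 2 + ρ / h ^ 3 * (Real.exp (s * h) - 1) := by
  set C : ℝ := Real.exp (s*h) - 1 - s*h - s^2*h^2/2 with hCdef
  have hC : 0 ≤ C := by
    have := Real.quadratic_le_exp_of_nonneg (mul_nonneg hs hh.le)
    rw [hCdef]; nlinarith
  have hYeq : Y = fun ω => if |X ω| ≤ h then X ω else 0 := funext hY
  have hYm : Measurable Y := by
    rw [hYeq]
    exact Measurable.ite (measurableSet_le hmeas.abs measurable_const) hmeas measurable_const
  have hYabs : ∀ ω, |Y ω| ≤ h := by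
    intro ω; rw [hY]
    split
    · assumption
    · simpa using hh.le
  have hYint : Integrable Y ℙ :=
    Integrable.mono' (integrable_const h) hYm.aestronglyMeasurable
      (ae_of_all _ fun ω => by simpa using hYabs ω)
  have hY2int : Integrable (fun ω => (Y ω)^2) ℙ :=
    Integrable.mono' (integrable_const (h^2)) (hYm.pow_const 2).aestronglyMeasurable
      (ae_of_all _ fun ω => by
        have := hYabs ω
        have h0 : ‖(Y ω)^2‖ = |Y ω|^2 := by rw [Real.norm_eq_abs, abs_pow, sq_abs, ← sq_abs]
        rw [h0]
        exact pow_le_pow_left₀ (abs_nonneg _) this 2)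
  have hY3int : Integrable (fun ω => |Y ω|^3) ℙ :=
    Integrable.mono' (integrable_const (h^3)) (hYm.abs.pow_const 3).aestronglyMeasurable
      (ae_of_all _ fun ω => by
        have := hYabs ω
        have h0 : ‖|Y ω|^3‖ = |Y ω|^3 := by
          rw [Real.norm_eq_abs, abs_of_nonneg (by positivity)]
        rw [h0]
        exact pow_le_pow_left₀ (abs_nonneg _) this 3)
  have hexpint : Integrable (fun ω => Real.exp (s * Y ω)) ℙ :=
    Integrable.mono' (integrable_const (Real.exp (s*h)))
      (Real.measurable_exp.comp (hYm.const_mul s)).aestronglyMeasurable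
      (ae_of_all _ fun ω => by
        rw [Real.norm_eq_abs, abs_of_pos (Real.exp_pos _), Real.exp_le_exp]
        exact mul_le_mul_of_nonneg_left (le_trans (le_abs_self _) (hYabs ω)) hs)
  have hXint : Integrable X ℙ :=
    Integrable.mono' ((integrable_const 1).add hint3) hmeas.aestronglyMeasurable
      (ae_of_all _ fun ω => by
        simp only [Pi.add_apply, Real.norm_eq_abs]
        nlinarith [mul_nonneg (abs_nonneg (X ω)) (sq_nonneg (|X ω| - 1)),
          sq_nonneg (|X ω| - 1), abs_nonneg (X ω)])
  have hX2int : Integrable (fun ω => (X ω)^2) ℙ :=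
    Integrable.mono' ((integrable_const 1).add hint3)
      (hmeas.pow_const 2).aestronglyMeasurable
      (ae_of_all _ fun ω => by
        simp only [Pi.add_apply]
        have h0 : ‖(X ω)^2‖ = |X ω|^2 := by rw [Real.norm_eq_abs, abs_pow, sq_abs, ← sq_abs]
        rw [h0]
        rcases le_or_gt (|X ω|) 1 with hc | hc
        · nlinarith [abs_nonneg (X ω)]
        · nlinarith [abs_nonneg (X ω)])
  have hρ : 0 ≤ ρ := h3 ▸ integral_nonneg (fun ω => by positivity)
  have hZbound : ∀ ω, |X ω - Y ω| ≤ |X ω|^3 / h^2 := by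
    intro ω; rw [hY]
    split
    · simp; positivity
    · rename_i hcase
      push_neg at hcase
      rw [sub_zero, le_div_iff₀ (by positivity)]
      have h5 : h ≤ |X ω| := hcase.le
      have h6 : h^2 ≤ |X ω|^2 := by nlinarith
      nlinarith [mul_le_mul_of_nonneg_left h6 (abs_nonneg (X ω))]
  have hIZ : |∫ ω, (X ω - Y ω) ∂ℙ| ≤ ρ / h^2 := by
    calc |∫ ω, (X ω - Y ω) ∂ℙ| ≤ ∫ ω, |X ω - Y ω| ∂ℙ := by
          simpa [Real.norm_eq_abs] using
            norm_integral_le_integral_norm (fun ω => X ω - Y ω) (μ := ℙ)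
      _ ≤ ∫ ω, |X ω|^3 / h^2 ∂ℙ :=
          integral_mono (hXint.sub hYint).abs (hint3.div_const _) hZbound
      _ = ρ / h^2 := by rw [integral_div, h3]
  have hIY : ∫ ω, Y ω ∂ℙ ≤ ρ / h^2 := by
    have hsub : ∫ ω, (X ω - Y ω) ∂ℙ = ∫ ω, X ω ∂ℙ - ∫ ω, Y ω ∂ℙ :=
      integral_sub hXint hYint
    rw [h1] at hsub
    have := neg_abs_le (∫ ω, (X ω - Y ω) ∂ℙ)
    linarith
  have hIY2 : ∫ ω, (Y ω)^2 ∂ℙ ≤ 1 := by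
    rw [← h2]
    refine integral_mono hY2int hX2int (fun ω => ?_)
    rw [hY]
    split
    · exact le_rfl
    · simpa using sq_nonneg (X ω)
  have hIY3 : ∫ ω, |Y ω|^3 ∂ℙ ≤ ρ := by
    rw [← h3]
    refine integral_mono hY3int hint3 (fun ω => ?_)
    rw [hY]
    split
    · exact le_rfl
    · simp
  -- pointwise bound and integration
  have i1 : Integrable (fun ω => (1:ℝ) + s*Y ω) ℙ :=
    (integrable_const 1).add (hYint.const_mul s)
  have i2 : Integrable (fun ω => 1 + s*Y ω + s^2/2*(Y ω)^2) ℙ :=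
    i1.add (hY2int.const_mul _)
  have hgint : Integrable (fun ω => 1 + s*Y ω + s^2/2*(Y ω)^2 + C/h^3*|Y ω|^3) ℙ :=
    i2.add (hY3int.const_mul _)
  have hmain : ∫ ω, Real.exp (s * Y ω) ∂ℙ
      ≤ ∫ ω, (1 + s*Y ω + s^2/2*(Y ω)^2 + C/h^3*|Y ω|^3) ∂ℙ := by
    refine integral_mono hexpint hgint (fun ω => ?_)
    have := pt_bound' hh hs (hYabs ω)
    rw [hCdef]
    linarith
  have hcalc : ∫ ω, (1 + s*Y ω + s^2/2*(Y ω)^2 + C/h^3*|Y ω|^3) ∂ℙ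
      = 1 + s * ∫ ω, Y ω ∂ℙ + s^2/2 * ∫ ω, (Y ω)^2 ∂ℙ + C/h^3 * ∫ ω, |Y ω|^3 ∂ℙ := by
    rw [integral_add i2 (hY3int.const_mul _),
      integral_add i1 (hY2int.const_mul _),
      integral_add (integrable_const 1) (hYint.const_mul s),
      integral_const, integral_const_mul, integral_const_mul, integral_const_mul]
    simp
  rw [hcalc] at hmain
  -- final arithmetic
  have hb1 : s * ∫ ω, Y ω ∂ℙ ≤ s * (ρ/h^2) := mul_le_mul_of_nonneg_left hIY hs
  have hb2 : s^2/2 * ∫ ω, (Y ω)^2 ∂ℙ ≤ s^2/2 := by nlinarith [sq_nonneg s]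
  have hb3 : C/h^3 * ∫ ω, |Y ω|^3 ∂ℙ ≤ C/h^3 * ρ :=
    mul_le_mul_of_nonneg_left hIY3 (by positivity)
  have hb4 : s * (ρ/h^2) + C/h^3 * ρ ≤ ρ/h^3 * (Real.exp (s*h) - 1) := by
    have e : s * (ρ/h^2) + C/h^3 * ρ = ρ/h^3 * (s*h + C) := by
      field_simp
    rw [e]
    have : s*h + C ≤ Real.exp (s*h) - 1 := by
      rw [hCdef]; nlinarith [sq_nonneg (s*h)]
    exact mul_le_mul_of_nonneg_left this (by positivity)
  linarith
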